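/- arXiv:1006.4762 — 2 statements merged into one kernel-verified Lean document; each statement's English description precedes it below -/
import Mathlib

section
/- For every k with 1 ≤ k ≤ n, the following identity (relation R̃_k^+) holds in F_q[x_1,…,x_n,y_1,…,y_n]: Σ_{i=0}^{k−1} Σ_{j=0}^{n−k} (−1)^{i+j} ( c_{k−1,i}^q · c*_{n−k,j} · u_{i−j+1}^{q^{min(i+1,j)}} − f̃_k · c_{k−1,i} · c*_{n−k,j} · u_{i−j}^{q^{min(i,j)}} ) = 0. -/
open MvPolynomial

variable (F : Type) [Field F] [Fintype F] (n : ℕ)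

/-- `fX F n k` is the orbit product `f_k` (1-indexed, meaningful for `1 ≤ k ≤ n`). -/
noncomputable def fX (k : ℕ) : MvPolynomial (Fin n ⊕ Fin n) F :=
  if h : 1 ≤ k ∧ k ≤ n then
    ∏ α : Fin (k - 1) → F,
      (X (Sum.inl ⟨k - 1, by omega⟩) +
        ∑ j : Fin (k - 1), C (α j) * X (Sum.inl ⟨j.val, by omega⟩))
  else 0

/-- `fY F n k` is `f_k^*` (1-indexed), the orbit product of `y_{n+1-k}`. -/
noncomputable def fY (k : ℕ) : MvPolynomial (Fin n ⊕ Fin n) F :=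
  if h : 1 ≤ k ∧ k ≤ n then
    ∏ α : Fin (k - 1) → F,
      (X (Sum.inr ⟨n - k, by omega⟩) +
        ∑ j : Fin (k - 1), C (α j) * X (Sum.inr ⟨n - 1 - j.val, by omega⟩))
  else 0

/-- `uInv F n j` is the invariant `u_j`, for `j : ℤ`. -/
noncomputable def uInv (j : ℤ) : MvPolynomial (Fin n ⊕ Fin n) F :=
  if 0 ≤ j then ∑ k : Fin n, X (Sum.inl k) ^ (Fintype.card F) ^ j.toNat * X (Sum.inr k)
  else ∑ k : Fin n, X (Sum.inl k) * X (Sum.inr k) ^ (Fintype.card F) ^ (-j).toNat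

/-- `cX F n s t` is the Dickson-type invariant `c_{s,t}` (in the `x`-variables):
the sum over strictly increasing sequences `1 ≤ j_1 < ⋯ < j_{s-t} ≤ s` (encoded as
strictly monotone functions `Fin (s-t) → Fin s`) of `∏_l f_{j_l}^{(q-1)·q^{t+l-j_l}}`. -/
noncomputable def cX (s t : ℕ) : MvPolynomial (Fin n ⊕ Fin n) F :=
  if s ≤ n then
    ∑ g ∈ Finset.univ.filter (fun g : Fin (s - t) → Fin s => ∀ a b : Fin (s - t), a < b → g a < g b),
      ∏ l : Fin (s - t),
        fX F n ((g l).val + 1) ^ ((Fintype.card F - 1) * (Fintype.card F) ^ (t + l.val - (g l).val))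
  else 0

/-- `cY F n s t` is `c_{s,t}^*` (in the `y`-variables). -/
noncomputable def cY (s t : ℕ) : MvPolynomial (Fin n ⊕ Fin n) F :=
  if s ≤ n then
    ∑ g ∈ Finset.univ.filter (fun g : Fin (s - t) → Fin s => ∀ a b : Fin (s - t), a < b → g a < g b),
      ∏ l : Fin (s - t),
        fY F n ((g l).val + 1) ^ ((Fintype.card F - 1) * (Fintype.card F) ^ (t + l.val - (g l).val))
  else 0

namespace Rk

variable {F n}

/-! ### Frobenius facts -/

lemma sum_pow_q {ι : Type} (s : Finset ι) (f : ι → MvPolynomial (Fin n ⊕ Fin n) F) (e : ℕ) :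
    (∑ x ∈ s, f x) ^ (Fintype.card F ^ e) = ∑ x ∈ s, f x ^ (Fintype.card F ^ e) := by
  obtain ⟨m, hp, hc⟩ := FiniteField.card F (ringChar F)
  haveI : Fact (Nat.Prime (ringChar F)) := ⟨hp⟩
  rw [hc, ← pow_mul]
  generalize (m : ℕ) * e = N
  induction N with
  | zero => simp
  | succ N ih =>
    rw [pow_succ, pow_mul, ih, sum_pow_char]
    refine Finset.sum_congr rfl fun x _ => ?_
    rw [← pow_mul, ← pow_succ]

lemma add_pow_q (x y : MvPolynomial (Fin n ⊕ Fin n) F) (e : ℕ) :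
    (x + y) ^ (Fintype.card F ^ e) = x ^ (Fintype.card F ^ e) + y ^ (Fintype.card F ^ e) := by
  have h := sum_pow_q (F := F) (n := n) Finset.univ (fun b : Bool => if b then x else y) e
  simpa [Fintype.sum_bool] using h

lemma C_pow_q (a : F) (e : ℕ) :
    (C a : MvPolynomial (Fin n ⊕ Fin n) F) ^ (Fintype.card F ^ e) = C a := by
  rw [← map_pow, FiniteField.pow_card_pow]

lemma C_pow_card (a : F) :
    (C a : MvPolynomial (Fin n ⊕ Fin n) F) ^ (Fintype.card F) = C a := by
  rw [← map_pow, FiniteField.pow_card]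

lemma neg_one_pow_card : (-1 : MvPolynomial (Fin n ⊕ Fin n) F) ^ (Fintype.card F) = -1 := by
  have : (-1 : MvPolynomial (Fin n ⊕ Fin n) F) = C (-1 : F) := by simp
  rw [this, C_pow_card]

lemma neg_one_pow_pow_card (s : ℕ) :
    ((-1 : MvPolynomial (Fin n ⊕ Fin n) F) ^ s) ^ (Fintype.card F) = (-1) ^ s := by
  rw [← pow_mul, mul_comm, pow_mul, neg_one_pow_card]

lemma neg_one_pow_card_sub_one :
    (-1 : MvPolynomial (Fin n ⊕ Fin n) F) ^ (Fintype.card F - 1) = 1 := by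
  have hq : 1 ≤ Fintype.card F := Fintype.card_pos
  have h2 : (-1 : MvPolynomial (Fin n ⊕ Fin n) F) ^ (Fintype.card F - 1) * (-1) = -1 := by
    rw [← pow_succ, Nat.sub_add_cancel hq, neg_one_pow_card]
  calc (-1 : MvPolynomial (Fin n ⊕ Fin n) F) ^ (Fintype.card F - 1)
      = ((-1 : MvPolynomial (Fin n ⊕ Fin n) F) ^ (Fintype.card F - 1) * (-1)) * (-1) := by ring
    _ = (-1 : MvPolynomial (Fin n ⊕ Fin n) F) * (-1) := by rw [h2]
    _ = 1 := by ring

/-! ### The product `∏ (w + C a * c)` -/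

lemma prod_X_sub_C_univ :
    ∏ a : F, (Polynomial.X - Polynomial.C a) =
      Polynomial.X ^ (Fintype.card F) - Polynomial.X := by
  have hq1 : 1 < Fintype.card F := Fintype.one_lt_card
  have hm : (Polynomial.X ^ (Fintype.card F) - Polynomial.X : Polynomial F).Monic := by
    apply Polynomial.monic_X_pow_sub
    rw [Polynomial.degree_X]
    exact_mod_cast hq1
  have hs : Polynomial.Splits
      (Polynomial.X ^ (Fintype.card F) - Polynomial.X : Polynomial F) := by
    rw [Polynomial.splits_iff_card_roots, FiniteField.roots_X_pow_card_sub_X,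
      FiniteField.X_pow_card_sub_X_natDegree_eq F hq1]
    simp [Finset.card_univ]
  have h := hs.eq_prod_roots_of_monic hm
  rw [FiniteField.roots_X_pow_card_sub_X] at h
  rw [h]
  exact Finset.prod_eq_multiset_prod _ _

lemma prod_add_ringHom {K : Type} [Field K] (ψ : F →+* K) (y : K) :
    ∏ a : F, (y + ψ a) = y ^ (Fintype.card F) - y := by
  have h1 : ∏ a : F, (y + ψ a) = ∏ a : F, (y - ψ a) := by
    refine Finset.prod_equiv (Equiv.neg F) (by simp) (fun a _ => ?_)
    simp [sub_neg_eq_add]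
  have h2 := congrArg (Polynomial.eval₂ ψ y) (prod_X_sub_C_univ (F := F))
  rw [Polynomial.eval₂_finset_prod] at h2
  simp only [Polynomial.eval₂_sub, Polynomial.eval₂_X, Polynomial.eval₂_C,
    Polynomial.eval₂_X_pow] at h2
  rw [h1, h2]

lemma prod_linear (w c : MvPolynomial (Fin n ⊕ Fin n) F) :
    ∏ a : F, (w + C a * c) = w ^ (Fintype.card F) - c ^ (Fintype.card F - 1) * w := by
  by_cases hc : c = 0
  · subst hc
    have hq1 : 1 < Fintype.card F := Fintype.one_lt_card
    simp [Finset.prod_const, Finset.card_univ, zero_pow, Nat.sub_ne_zero_of_lt hq1]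
  · set K := FractionRing (MvPolynomial (Fin n ⊕ Fin n) F)
    have hinj : Function.Injective (algebraMap (MvPolynomial (Fin n ⊕ Fin n) F) K) :=
      IsFractionRing.injective _ _
    apply hinj
    rw [map_prod, map_sub, map_pow, map_mul, map_pow]
    simp only [map_add, map_mul]
    set φ := algebraMap (MvPolynomial (Fin n ⊕ Fin n) F) K
    set ψ : F →+* K := φ.comp (C : F →+* MvPolynomial (Fin n ⊕ Fin n) F) with hψ
    have hφC : ∀ a : F, φ (C a) = ψ a := fun a => rfl
    set u := φ w
    set t := φ c
    have ht : t ≠ 0 := fun h => hc (hinj (by simpa using h))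
    have hfac : ∀ a : F, u + φ (C a) * t = t * (u / t + ψ a) := by
      intro a
      rw [hφC]
      rw [mul_add, mul_div_cancel₀ _ ht]
      try ring
    calc ∏ a : F, (u + φ (C a) * t) = ∏ a : F, (t * (u / t + ψ a)) :=
          Finset.prod_congr rfl fun a _ => hfac a
      _ = t ^ (Fintype.card F) * ∏ a : F, (u / t + ψ a) := by
          rw [Finset.prod_mul_distrib, Finset.prod_const, Finset.card_univ]
      _ = t ^ (Fintype.card F) * ((u / t) ^ (Fintype.card F) - u / t) := by
          rw [prod_add_ringHom]
      _ = u ^ (Fintype.card F) - t ^ (Fintype.card F - 1) * u := by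
          have hq1 : 1 ≤ Fintype.card F := Fintype.card_pos
          have hts : t ^ (Fintype.card F) = t ^ (Fintype.card F - 1) * t := by
            rw [← pow_succ, Nat.sub_add_cancel hq1]
          rw [div_pow, hts]
          rw [mul_sub, mul_div_cancel₀ _ (mul_ne_zero (pow_ne_zero _ ht) ht), mul_assoc, mul_div_cancel₀ _ ht]
          try ring

/-! ### Generic orbit products and Dickson-type sums -/

noncomputable def fG (xv : ℕ → MvPolynomial (Fin n ⊕ Fin n) F) (k : ℕ) :
    MvPolynomial (Fin n ⊕ Fin n) F :=
  ∏ α : Fin (k - 1) → F, (xv (k - 1) + ∑ j : Fin (k - 1), C (α j) * xv j.val)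

def SM (m s : ℕ) : Finset (Fin m → Fin s) :=
  Finset.univ.filter (fun g => ∀ a b : Fin m, a < b → g a < g b)

lemma mem_SM {m s : ℕ} {g : Fin m → Fin s} :
    g ∈ SM m s ↔ ∀ a b : Fin m, a < b → g a < g b := by
  simp [SM]

noncomputable def TG (xv : ℕ → MvPolynomial (Fin n ⊕ Fin n) F) (m s t : ℕ) :
    MvPolynomial (Fin n ⊕ Fin n) F :=
  ∑ g ∈ SM m s, ∏ l : Fin m,
    fG xv ((g l).val + 1) ^ ((Fintype.card F - 1) * (Fintype.card F) ^ (t + l.val - (g l).val))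

noncomputable def cG (xv : ℕ → MvPolynomial (Fin n ⊕ Fin n) F) (s t : ℕ) :
    MvPolynomial (Fin n ⊕ Fin n) F :=
  TG xv (s - t) s t

lemma cG_eq_TG (xv : ℕ → MvPolynomial (Fin n ⊕ Fin n) F) (s t m : ℕ) (h : s - t = m) :
    cG xv s t = TG xv m s t := by
  subst h; rfl

/-- values of a strictly monotone function grow at least linearly -/
lemma SM.add_le {m s : ℕ} {g : Fin m → Fin s}
    (hg : ∀ a b : Fin m, a < b → g a < g b) :
    ∀ (d : ℕ) (a b : Fin m), a.val + d = b.val → (g a).val + d ≤ (g b).val := by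
  intro d
  induction d with
  | zero =>
    intro a b h
    have : a = b := Fin.ext (by omega)
    subst this; omega
  | succ d ih =>
    intro a b h
    have hb' : a.val + d < m := by have := b.isLt; omega
    have h1 := ih a ⟨a.val + d, hb'⟩ rfl
    have h2 : g ⟨a.val + d, hb'⟩ < g b := hg _ _ (by rw [Fin.lt_def]; simp; omega)
    rw [Fin.lt_def] at h2
    omega

lemma TG_empty (xv : ℕ → MvPolynomial (Fin n ⊕ Fin n) F) (m s t : ℕ) (h : s < m) :
    TG xv m s t = 0 := by
  rw [TG]
  have hSM : SM m s = ∅ := by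
    rw [Finset.eq_empty_iff_forall_notMem]
    intro g hg
    rw [mem_SM] at hg
    have h0 : 0 < m := by omega
    have hlast : m - 1 < m := by omega
    have := SM.add_le hg (m - 1) ⟨0, h0⟩ ⟨m - 1, hlast⟩ (by simp)
    have h2 := (g ⟨m - 1, hlast⟩).isLt
    have h3 := (g ⟨0, h0⟩).isLt
    omega
  rw [hSM, Finset.sum_empty]

lemma TG_zero (xv : ℕ → MvPolynomial (Fin n ⊕ Fin n) F) (s t : ℕ) :
    TG xv 0 s t = 1 := by
  rw [TG]
  have hSM : SM 0 s = Finset.univ := by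
    rw [SM, Finset.filter_true_of_mem]
    intro g _ a
    exact a.elim0
  rw [hSM]
  rw [Finset.sum_congr rfl (fun g _ => Fin.prod_univ_zero _)]
  simp

lemma cG_self (xv : ℕ → MvPolynomial (Fin n ⊕ Fin n) F) (s : ℕ) : cG xv s s = 1 := by
  rw [cG_eq_TG xv s s 0 (by omega), TG_zero]

lemma partA (xv : ℕ → MvPolynomial (Fin n ⊕ Fin n) F) (m' s t : ℕ) (h : t + m' = s) :
    ∑ g ∈ (SM (m' + 1) (s + 1)).filter (fun g => g (Fin.last m') = Fin.last s),
        ∏ l : Fin (m' + 1),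
          fG xv ((g l).val + 1) ^
            ((Fintype.card F - 1) * (Fintype.card F) ^ (t + l.val - (g l).val))
      = fG xv (s + 1) ^ (Fintype.card F - 1) * TG xv m' s t := by
  rw [TG, Finset.mul_sum]
  refine Finset.sum_bij'
    (i := fun g hg => fun l : Fin m' => (⟨(g l.castSucc).val, by
      have h1 : ∀ a b : Fin (m' + 1), a < b → g a < g b :=
        mem_SM.1 (Finset.mem_filter.1 hg).1
      have h2 : g (Fin.last m') = Fin.last s := (Finset.mem_filter.1 hg).2
      have h3 := h1 _ _ (Fin.castSucc_lt_last l)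
      rw [h2, Fin.lt_def] at h3
      simpa using h3⟩ : Fin s))
    (j := fun g' _ => Fin.snoc (fun l => (g' l).castSucc) (Fin.last s))
    ?_ ?_ ?_ ?_ ?_
  · -- maps into SM m' s
    intro g hg
    rw [mem_SM]
    intro a b hab
    have h1 : ∀ a b : Fin (m' + 1), a < b → g a < g b :=
      mem_SM.1 (Finset.mem_filter.1 hg).1
    have := h1 a.castSucc b.castSucc (by rwa [Fin.castSucc_lt_castSucc_iff])
    rw [Fin.lt_def] at this ⊢
    simpa using this
  · -- reverse map lands in the filtered set
    intro g' hg'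
    try dsimp only
    rw [Finset.mem_filter]
    constructor
    · rw [mem_SM]
      intro a b hab
      rcases eq_or_ne b (Fin.last m') with hb | hb
      · subst hb
        have ha : a ≠ Fin.last m' := Fin.ne_last_of_lt hab
        obtain ⟨a', rfl⟩ := Fin.exists_castSucc_eq.2 ha
        rw [Fin.snoc_castSucc, Fin.snoc_last]
        exact Fin.castSucc_lt_last _
      · obtain ⟨b', rfl⟩ := Fin.exists_castSucc_eq.2 hb
        have ha : a ≠ Fin.last m' := Fin.ne_last_of_lt (lt_of_lt_of_le hab (Fin.le_last _))
        obtain ⟨a', rfl⟩ := Fin.exists_castSucc_eq.2 ha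
        rw [Fin.snoc_castSucc, Fin.snoc_castSucc, Fin.castSucc_lt_castSucc_iff]
        exact mem_SM.1 hg' a' b' (by rwa [Fin.castSucc_lt_castSucc_iff] at hab)
    · exact Fin.snoc_last _ _
  · -- left inverse
    intro g hg
    dsimp only
    funext l
    rcases eq_or_ne l (Fin.last m') with hl | hl
    · subst hl
      rw [Fin.snoc_last]
      exact ((Finset.mem_filter.1 hg).2).symm
    · obtain ⟨l', rfl⟩ := Fin.exists_castSucc_eq.2 hl
      rw [Fin.snoc_castSucc]
      exact Fin.ext (by simp)
  · -- right inverse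
    intro g' hg'
    try dsimp only
    funext l
    exact Fin.ext (by simp)
  · -- values agree
    intro g hg
    have h2 : g (Fin.last m') = Fin.last s := (Finset.mem_filter.1 hg).2
    rw [Fin.prod_univ_castSucc]
    have hlast : fG xv ((g (Fin.last m')).val + 1) ^
        ((Fintype.card F - 1) * (Fintype.card F) ^ (t + (Fin.last m').val - (g (Fin.last m')).val))
        = fG xv (s + 1) ^ (Fintype.card F - 1) := by
      rw [h2]
      simp only [Fin.val_last]
      rw [show t + m' - s = 0 by omega, pow_zero, mul_one]
    rw [hlast, mul_comm]
    rfl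

lemma partB (xv : ℕ → MvPolynomial (Fin n ⊕ Fin n) F) (m' s t : ℕ) :
    ∑ g ∈ (SM (m' + 1) (s + 1)).filter (fun g => ¬ g (Fin.last m') = Fin.last s),
        ∏ l : Fin (m' + 1),
          fG xv ((g l).val + 1) ^
            ((Fintype.card F - 1) * (Fintype.card F) ^ (t + l.val - (g l).val))
      = TG xv (m' + 1) s t := by
  rw [TG]
  refine Finset.sum_bij'
    (i := fun g hg => fun l : Fin (m' + 1) => (⟨(g l).val, by
      have h1 : ∀ a b : Fin (m' + 1), a < b → g a < g b :=
        mem_SM.1 (Finset.mem_filter.1 hg).1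
      have h2 : g (Fin.last m') ≠ Fin.last s := (Finset.mem_filter.1 hg).2
      have h3 : (g l).val ≤ (g (Fin.last m')).val := by
        rcases eq_or_ne l (Fin.last m') with hl | hl
        · rw [hl]
        · exact le_of_lt (Fin.lt_def.1 (h1 _ _ (Fin.lt_last_iff_ne_last.2 hl)))
      have h4 : (g (Fin.last m')).val ≠ s := fun hv => h2 (Fin.ext (by simpa using hv))
      have h5 := (g (Fin.last m')).isLt
      omega⟩ : Fin s))
    (j := fun g' _ => fun l => (g' l).castSucc)
    ?_ ?_ ?_ ?_ ?_
  · intro g hg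
    rw [mem_SM]
    intro a b hab
    have h1 : ∀ a b : Fin (m' + 1), a < b → g a < g b :=
      mem_SM.1 (Finset.mem_filter.1 hg).1
    have := h1 a b hab
    rw [Fin.lt_def] at this ⊢
    simpa using this
  · intro g' hg'
    try dsimp only
    rw [Finset.mem_filter]
    constructor
    · rw [mem_SM]
      intro a b hab
      rw [Fin.castSucc_lt_castSucc_iff]
      exact mem_SM.1 hg' a b hab
    · intro hcon
      have := congrArg Fin.val hcon
      simp only [Fin.coe_castSucc, Fin.val_last] at this
      have := (g' (Fin.last m')).isLt
      omega
  · intro g hg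
    dsimp only
    funext l
    exact Fin.ext (by simp)
  · intro g' hg'
    dsimp only
    funext l
    exact Fin.ext (by simp)
  · intro g hg
    rfl

lemma TG_succ (xv : ℕ → MvPolynomial (Fin n ⊕ Fin n) F) (m' s t : ℕ) (h : t + m' = s) :
    TG xv (m' + 1) (s + 1) t
      = fG xv (s + 1) ^ (Fintype.card F - 1) * TG xv m' s t + TG xv (m' + 1) s t := by
  rw [TG, ← Finset.sum_filter_add_sum_filter_not (SM (m' + 1) (s + 1))
    (fun g => g (Fin.last m') = Fin.last s), partA xv m' s t h, partB xv m' s t]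

lemma sum_pow_card {ι : Type} (s : Finset ι) (f : ι → MvPolynomial (Fin n ⊕ Fin n) F) :
    (∑ x ∈ s, f x) ^ (Fintype.card F) = ∑ x ∈ s, f x ^ (Fintype.card F) := by
  have h := sum_pow_q s f 1
  simpa using h

lemma TG_pow (xv : ℕ → MvPolynomial (Fin n ⊕ Fin n) F) (m' s t : ℕ) (h : t + (m' + 1) = s) :
    TG xv (m' + 1) s (t + 1) = TG xv (m' + 1) s t ^ (Fintype.card F) := by
  rw [TG, TG, sum_pow_card]
  refine Finset.sum_congr rfl fun g hg => ?_
  rw [← Finset.prod_pow]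
  refine Finset.prod_congr rfl fun l _ => ?_
  rw [← pow_mul]
  congr 1
  have hgl : (g l).val ≤ t + l.val := by
    have h1 := mem_SM.1 hg
    have hlast : m' < m' + 1 := by omega
    have hle := SM.add_le h1 (m' - l.val) l ⟨m', hlast⟩ (by simp; omega)
    have h2 := (g ⟨m', hlast⟩).isLt
    try simp only [Fin.val_mk] at hle h2
    have := l.isLt
    omega
  rw [show t + 1 + l.val - (g l).val = (t + l.val - (g l).val) + 1 by omega, pow_succ]
  ring

lemma cG_succ_zero (xv : ℕ → MvPolynomial (Fin n ⊕ Fin n) F) (s : ℕ) :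
    cG xv (s + 1) 0 = fG xv (s + 1) ^ (Fintype.card F - 1) * cG xv s 0 := by
  rw [cG_eq_TG xv (s + 1) 0 (s + 1) (by omega), cG_eq_TG xv s 0 s (by omega),
    TG_succ xv s s 0 (by omega), TG_empty xv (s + 1) s 0 (by omega), add_zero]

lemma cG_succ_succ (xv : ℕ → MvPolynomial (Fin n ⊕ Fin n) F) (s t : ℕ) (h : t + 1 ≤ s) :
    cG xv (s + 1) (t + 1)
      = cG xv s t ^ (Fintype.card F) + fG xv (s + 1) ^ (Fintype.card F - 1) * cG xv s (t + 1) := by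
  rw [cG_eq_TG xv (s + 1) (t + 1) ((s - t - 1) + 1) (by omega),
    TG_succ xv (s - t - 1) s (t + 1) (by omega),
    TG_pow xv (s - t - 1) s t (by omega),
    ← cG_eq_TG xv s (t + 1) (s - t - 1) (by omega),
    ← cG_eq_TG xv s t ((s - t - 1) + 1) (by omega)]
  ring


/-! ### The generating identity -/

set_option maxHeartbeats 1000000 in
lemma prod_eq (xv : ℕ → MvPolynomial (Fin n ⊕ Fin n) F) (s : ℕ)
    (z : MvPolynomial (Fin n ⊕ Fin n) F) :
    ∏ α : Fin s → F, (z + ∑ j : Fin s, C (α j) * xv j.val)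
      = (-1 : MvPolynomial (Fin n ⊕ Fin n) F) ^ s *
        ∑ i ∈ Finset.range (s + 1),
          (-1 : MvPolynomial (Fin n ⊕ Fin n) F) ^ i * cG xv s i * z ^ (Fintype.card F) ^ i := by
  induction s generalizing z with
  | zero =>
    have h0 : cG xv 0 0 = 1 := cG_self xv 0
    simp [h0]
  | succ s ih =>
    have h1 : ∏ α : Fin (s + 1) → F, (z + ∑ j : Fin (s + 1), C (α j) * xv j.val)
        = ∏ a : F, ∏ α : Fin s → F,
            ((z + C a * xv s) + ∑ j : Fin s, C (α j) * xv j.val) := by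
      rw [← Fintype.prod_equiv (Fin.snocEquiv (fun _ : Fin (s + 1) => F))
        (fun p => z + ∑ j : Fin (s + 1), C ((Fin.snoc p.2 p.1 : Fin (s + 1) → F) j) * xv j.val)
        (fun α => z + ∑ j : Fin (s + 1), C (α j) * xv j.val)
        (fun p => by simp only [Fin.snocEquiv_apply])]
      rw [Fintype.prod_prod_type]
      refine Finset.prod_congr rfl fun a _ => Finset.prod_congr rfl fun α _ => ?_
      rw [Fin.sum_univ_castSucc]
      simp only [Fin.snoc_castSucc, Fin.snoc_last, Fin.coe_castSucc, Fin.val_last]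
      ring
    have hexp : ∀ (a : F) (i : ℕ), (z + C a * xv s) ^ (Fintype.card F) ^ i
        = z ^ (Fintype.card F) ^ i + C a * (xv s) ^ (Fintype.card F) ^ i := by
      intro a i
      rw [add_pow_q, mul_pow, C_pow_q]
    have hf : fG xv (s + 1)
        = (-1 : MvPolynomial (Fin n ⊕ Fin n) F) ^ s *
          ∑ i ∈ Finset.range (s + 1),
            (-1 : MvPolynomial (Fin n ⊕ Fin n) F) ^ i * cG xv s i *
              (xv s) ^ (Fintype.card F) ^ i := ih (xv s)
    set Sz : MvPolynomial (Fin n ⊕ Fin n) F :=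
      ∑ i ∈ Finset.range (s + 1), (-1) ^ i * cG xv s i * z ^ (Fintype.card F) ^ i with hSz
    set Sx : MvPolynomial (Fin n ⊕ Fin n) F :=
      ∑ i ∈ Finset.range (s + 1), (-1) ^ i * cG xv s i * (xv s) ^ (Fintype.card F) ^ i with hSx
    have h2 : ∀ a : F, ∏ α : Fin s → F, ((z + C a * xv s) + ∑ j : Fin s, C (α j) * xv j.val)
        = (-1 : MvPolynomial (Fin n ⊕ Fin n) F) ^ s * (Sz + C a * Sx) := by
      intro a
      rw [ih (z + C a * xv s)]
      congr 1
      rw [hSz, hSx, Finset.mul_sum, ← Finset.sum_add_distrib]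
      refine Finset.sum_congr rfl fun i _ => ?_
      rw [hexp a i]
      ring
    have h3 : ∏ α : Fin (s + 1) → F, (z + ∑ j : Fin (s + 1), C (α j) * xv j.val)
        = (-1 : MvPolynomial (Fin n ⊕ Fin n) F) ^ s *
            (Sz ^ (Fintype.card F) - Sx ^ (Fintype.card F - 1) * Sz) := by
      rw [h1, Finset.prod_congr rfl fun a _ => h2 a, Finset.prod_mul_distrib,
        Finset.prod_const, Finset.card_univ, neg_one_pow_pow_card, prod_linear]
    have hSxpow : Sx ^ (Fintype.card F - 1) = fG xv (s + 1) ^ (Fintype.card F - 1) := by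
      have hone : ((-1 : MvPolynomial (Fin n ⊕ Fin n) F) ^ s) ^ (Fintype.card F - 1) = 1 := by
        rw [← pow_mul, mul_comm, pow_mul, neg_one_pow_card_sub_one, one_pow]
      rw [hf, mul_pow, hone, one_mul]
    have hSzq : Sz ^ (Fintype.card F)
        = ∑ i ∈ Finset.range (s + 1),
            (-1 : MvPolynomial (Fin n ⊕ Fin n) F) ^ i * (cG xv s i) ^ (Fintype.card F) *
              z ^ (Fintype.card F) ^ (i + 1) := by
      rw [hSz, sum_pow_card]
      refine Finset.sum_congr rfl fun i _ => ?_
      rw [mul_pow, mul_pow, neg_one_pow_pow_card, ← pow_mul, ← pow_succ]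
    have hmid : ∀ i ∈ Finset.range s,
        (-1 : MvPolynomial (Fin n ⊕ Fin n) F) ^ (i + 1) * cG xv (s + 1) (i + 1) *
            z ^ (Fintype.card F) ^ (i + 1)
          = fG xv (s + 1) ^ (Fintype.card F - 1) *
              ((-1) ^ (i + 1) * cG xv s (i + 1) * z ^ (Fintype.card F) ^ (i + 1))
            - (-1) ^ i * (cG xv s i) ^ (Fintype.card F) * z ^ (Fintype.card F) ^ (i + 1) := by
      intro i hi
      rw [cG_succ_succ xv s i (by simpa using Finset.mem_range.1 hi)]
      rw [pow_succ]
      ring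
    have hT : ∑ i ∈ Finset.range (s + 1 + 1),
          (-1 : MvPolynomial (Fin n ⊕ Fin n) F) ^ i * cG xv (s + 1) i * z ^ (Fintype.card F) ^ i
        = fG xv (s + 1) ^ (Fintype.card F - 1) * Sz - Sz ^ (Fintype.card F) := by
      rw [hSzq, hSz, Finset.mul_sum]
      rw [Finset.sum_range_succ'
        (fun i => (-1 : MvPolynomial (Fin n ⊕ Fin n) F) ^ i * cG xv (s + 1) i *
          z ^ (Fintype.card F) ^ i) (s + 1)]
      rw [Finset.sum_range_succ
        (fun i => (-1 : MvPolynomial (Fin n ⊕ Fin n) F) ^ (i + 1) * cG xv (s + 1) (i + 1) *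
          z ^ (Fintype.card F) ^ (i + 1)) s]
      rw [Finset.sum_range_succ'
        (fun i => fG xv (s + 1) ^ (Fintype.card F - 1) *
          ((-1 : MvPolynomial (Fin n ⊕ Fin n) F) ^ i * cG xv s i * z ^ (Fintype.card F) ^ i)) s]
      rw [Finset.sum_range_succ
        (fun i => (-1 : MvPolynomial (Fin n ⊕ Fin n) F) ^ i * (cG xv s i) ^ (Fintype.card F) *
          z ^ (Fintype.card F) ^ (i + 1)) s]
      rw [Finset.sum_congr rfl hmid, Finset.sum_sub_distrib]
      rw [cG_succ_zero xv s, cG_self xv (s + 1), cG_self xv s]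
      ring
    rw [h3, hT, hSxpow]
    ring

/-! ### Specialization to the `x` and `y` variables -/

noncomputable def xvX : ℕ → MvPolynomial (Fin n ⊕ Fin n) F :=
  fun j => if h : j < n then X (Sum.inl ⟨j, h⟩) else 0

noncomputable def xvY : ℕ → MvPolynomial (Fin n ⊕ Fin n) F :=
  fun j => if h : j < n then X (Sum.inr ⟨n - 1 - j, by omega⟩) else 0

lemma fX_eq (k : ℕ) (h1 : 1 ≤ k) (h2 : k ≤ n) :
    fX F n k = fG (xvX (F := F) (n := n)) k := by
  rw [fX, dif_pos ⟨h1, h2⟩, fG]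
  refine Finset.prod_congr rfl fun α _ => ?_
  congr 1
  · simp only [xvX]
    rw [dif_pos (show k - 1 < n by omega)]
  · refine Finset.sum_congr rfl fun j _ => ?_
    congr 1
    simp only [xvX]
    rw [dif_pos (show j.val < n by have := j.isLt; omega)]

lemma fY_eq (k : ℕ) (h1 : 1 ≤ k) (h2 : k ≤ n) :
    fY F n k = fG (xvY (F := F) (n := n)) k := by
  rw [fY, dif_pos ⟨h1, h2⟩, fG]
  refine Finset.prod_congr rfl fun α _ => ?_
  congr 1
  · simp only [xvY]
    rw [dif_pos (show k - 1 < n by omega)]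
    exact congrArg X (congrArg Sum.inr (Fin.ext (by show n - k = n - 1 - (k - 1); omega)))
  · refine Finset.sum_congr rfl fun j _ => ?_
    congr 1
    simp only [xvY]
    rw [dif_pos (show j.val < n by have := j.isLt; omega)]

lemma cX_eq (s t : ℕ) (hs : s ≤ n) :
    cX F n s t = cG (xvX (F := F) (n := n)) s t := by
  rw [cX, if_pos hs, cG, TG]
  refine Finset.sum_congr rfl fun g hg => ?_
  refine Finset.prod_congr rfl fun l _ => ?_
  congr 1
  exact fX_eq ((g l).val + 1) (by omega) (by have := (g l).isLt; omega)

lemma cY_eq (s t : ℕ) (hs : s ≤ n) :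
    cY F n s t = cG (xvY (F := F) (n := n)) s t := by
  rw [cY, if_pos hs, cG, TG]
  refine Finset.sum_congr rfl fun g hg => ?_
  refine Finset.prod_congr rfl fun l _ => ?_
  congr 1
  exact fY_eq ((g l).val + 1) (by omega) (by have := (g l).isLt; omega)

lemma uInv_pow (i j : ℕ) :
    uInv F n ((i : ℤ) - (j : ℤ)) ^ (Fintype.card F ^ min i j)
      = ∑ m : Fin n,
          X (Sum.inl m) ^ (Fintype.card F ^ i) * X (Sum.inr m) ^ (Fintype.card F ^ j) := by
  rcases le_or_gt j i with h | h
  · rw [min_eq_right h, uInv, if_pos (by omega : (0 : ℤ) ≤ (i : ℤ) - (j : ℤ)), sum_pow_q]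
    refine Finset.sum_congr rfl fun m _ => ?_
    have hT : ((i : ℤ) - (j : ℤ)).toNat = i - j := by omega
    rw [mul_pow, ← pow_mul, ← pow_add, hT, Nat.sub_add_cancel h]
  · rw [min_eq_left (le_of_lt h), uInv, if_neg (by omega : ¬ (0 : ℤ) ≤ (i : ℤ) - (j : ℤ)),
      sum_pow_q]
    refine Finset.sum_congr rfl fun m _ => ?_
    have hT : (-((i : ℤ) - (j : ℤ))).toNat = j - i := by omega
    rw [mul_pow, ← pow_mul, ← pow_add, hT, Nat.sub_add_cancel (le_of_lt h)]

/-! ### Vanishing of the two factors -/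

lemma P_vanish (m : Fin n) (K : ℕ) (hK : K + 1 ≤ n) (hm : (m : ℕ) < K + 1) :
    (∑ i ∈ Finset.range (K + 1),
      (-1 : MvPolynomial (Fin n ⊕ Fin n) F) ^ i *
        (cG (xvX (F := F) (n := n)) K i ^ (Fintype.card F) *
            X (Sum.inl m) ^ (Fintype.card F) ^ (i + 1)
          - fG (xvX (F := F) (n := n)) (K + 1) ^ (Fintype.card F - 1) *
              cG (xvX (F := F) (n := n)) K i * X (Sum.inl m) ^ (Fintype.card F) ^ i)) = 0 := by
  have hprod : ∏ α : Fin (K + 1) → F,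
      (X (Sum.inl m) + ∑ j : Fin (K + 1), C (α j) * xvX (F := F) (n := n) j.val) = 0 := by
    apply Finset.prod_eq_zero
      (Finset.mem_univ (fun j : Fin (K + 1) => if (j : ℕ) = (m : ℕ) then (-1 : F) else 0))
    have hsum : (∑ j : Fin (K + 1),
        C (if (j : ℕ) = (m : ℕ) then (-1 : F) else 0) * xvX (F := F) (n := n) j.val)
        = - X (Sum.inl m) := by
      rw [Finset.sum_eq_single (⟨(m : ℕ), hm⟩ : Fin (K + 1))]
      · rw [if_pos rfl]
        have hx : xvX (F := F) (n := n) (m : ℕ) = X (Sum.inl m) := by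
          simp only [xvX]
          rw [dif_pos m.isLt]
        rw [hx]
        simp
      · intro b _ hb
        rw [if_neg (fun hv => hb (Fin.ext hv)), map_zero, zero_mul]
      · intro hmem
        exact absurd (Finset.mem_univ _) hmem
    rw [hsum, add_neg_cancel]
  have hS := prod_eq (xvX (F := F) (n := n)) (K + 1) (X (Sum.inl m))
  rw [hprod] at hS
  have hS0 : (∑ i ∈ Finset.range (K + 1 + 1),
      (-1 : MvPolynomial (Fin n ⊕ Fin n) F) ^ i * cG (xvX (F := F) (n := n)) (K + 1) i *
        X (Sum.inl m) ^ (Fintype.card F) ^ i) = 0 := by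
    rcases mul_eq_zero.1 hS.symm with h3 | h3
    · exact absurd h3 (pow_ne_zero _ (by norm_num))
    · exact h3
  have hmid : ∀ i ∈ Finset.range K,
      (-1 : MvPolynomial (Fin n ⊕ Fin n) F) ^ (i + 1) * cG (xvX (F := F) (n := n)) (K + 1) (i + 1) *
          X (Sum.inl m) ^ (Fintype.card F) ^ (i + 1)
        = (-1 : MvPolynomial (Fin n ⊕ Fin n) F) ^ (i + 1) *
              (fG (xvX (F := F) (n := n)) (K + 1) ^ (Fintype.card F - 1) *
                cG (xvX (F := F) (n := n)) K (i + 1)) *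
              X (Sum.inl m) ^ (Fintype.card F) ^ (i + 1)
          - (-1 : MvPolynomial (Fin n ⊕ Fin n) F) ^ i *
              cG (xvX (F := F) (n := n)) K i ^ (Fintype.card F) *
              X (Sum.inl m) ^ (Fintype.card F) ^ (i + 1) := by
    intro i hi
    have hiK : i + 1 ≤ K := Finset.mem_range.1 hi
    rw [cG_succ_succ (xvX (F := F) (n := n)) K i hiK, pow_succ]
    ring
  calc (∑ i ∈ Finset.range (K + 1),
      (-1 : MvPolynomial (Fin n ⊕ Fin n) F) ^ i *
        (cG (xvX (F := F) (n := n)) K i ^ (Fintype.card F) *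
            X (Sum.inl m) ^ (Fintype.card F) ^ (i + 1)
          - fG (xvX (F := F) (n := n)) (K + 1) ^ (Fintype.card F - 1) *
              cG (xvX (F := F) (n := n)) K i * X (Sum.inl m) ^ (Fintype.card F) ^ i))
      = (∑ i ∈ Finset.range (K + 1),
          (-1 : MvPolynomial (Fin n ⊕ Fin n) F) ^ i * cG (xvX (F := F) (n := n)) K i ^ (Fintype.card F) *
            X (Sum.inl m) ^ (Fintype.card F) ^ (i + 1))
        - ∑ i ∈ Finset.range (K + 1),
            (-1 : MvPolynomial (Fin n ⊕ Fin n) F) ^ i *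
              (fG (xvX (F := F) (n := n)) (K + 1) ^ (Fintype.card F - 1) *
                cG (xvX (F := F) (n := n)) K i) *
              X (Sum.inl m) ^ (Fintype.card F) ^ i := by
        rw [← Finset.sum_sub_distrib]
        exact Finset.sum_congr rfl fun i _ => by ring
    _ = 0 := by
        rw [Finset.sum_range_succ
          (fun i => (-1 : MvPolynomial (Fin n ⊕ Fin n) F) ^ i *
            cG (xvX (F := F) (n := n)) K i ^ (Fintype.card F) *
            X (Sum.inl m) ^ (Fintype.card F) ^ (i + 1)) K]
        rw [Finset.sum_range_succ'
          (fun i => (-1 : MvPolynomial (Fin n ⊕ Fin n) F) ^ i *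
            (fG (xvX (F := F) (n := n)) (K + 1) ^ (Fintype.card F - 1) *
              cG (xvX (F := F) (n := n)) K i) *
            X (Sum.inl m) ^ (Fintype.card F) ^ i) K]
        rw [Finset.sum_range_succ'
          (fun i => (-1 : MvPolynomial (Fin n ⊕ Fin n) F) ^ i * cG (xvX (F := F) (n := n)) (K + 1) i *
            X (Sum.inl m) ^ (Fintype.card F) ^ i) (K + 1),
          Finset.sum_range_succ
          (fun i => (-1 : MvPolynomial (Fin n ⊕ Fin n) F) ^ (i + 1) *
            cG (xvX (F := F) (n := n)) (K + 1) (i + 1) *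
            X (Sum.inl m) ^ (Fintype.card F) ^ (i + 1)) K,
          Finset.sum_congr rfl hmid, Finset.sum_sub_distrib,
          cG_succ_zero (xvX (F := F) (n := n)) K, cG_self (xvX (F := F) (n := n)) (K + 1)] at hS0
        rw [cG_self (xvX (F := F) (n := n)) K]
        linear_combination - hS0

lemma Q_vanish (m : Fin n) (s : ℕ) (hs : s ≤ n) (hj0 : n - 1 - (m : ℕ) < s) :
    (∑ j ∈ Finset.range (s + 1),
      (-1 : MvPolynomial (Fin n ⊕ Fin n) F) ^ j * cG (xvY (F := F) (n := n)) s j *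
        X (Sum.inr m) ^ (Fintype.card F) ^ j) = 0 := by
  have hprod : ∏ α : Fin s → F,
      (X (Sum.inr m) + ∑ j : Fin s, C (α j) * xvY (F := F) (n := n) j.val) = 0 := by
    apply Finset.prod_eq_zero
      (Finset.mem_univ (fun j : Fin s => if (j : ℕ) = n - 1 - (m : ℕ) then (-1 : F) else 0))
    have hsum : (∑ j : Fin s,
        C (if (j : ℕ) = n - 1 - (m : ℕ) then (-1 : F) else 0) * xvY (F := F) (n := n) j.val)
        = - X (Sum.inr m) := by
      rw [Finset.sum_eq_single (⟨n - 1 - (m : ℕ), hj0⟩ : Fin s)]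
      · rw [if_pos rfl]
        have hx : xvY (F := F) (n := n) (n - 1 - (m : ℕ)) = X (Sum.inr m) := by
          simp only [xvY]
          rw [dif_pos (show n - 1 - (m : ℕ) < n by have := m.isLt; omega)]
          exact congrArg X (congrArg Sum.inr (Fin.ext
            (by show n - 1 - (n - 1 - (m : ℕ)) = (m : ℕ); have := m.isLt; omega)))
        rw [hx]
        simp
      · intro b _ hb
        rw [if_neg (fun hv => hb (Fin.ext hv)), map_zero, zero_mul]
      · intro hmem
        exact absurd (Finset.mem_univ _) hmem
    rw [hsum, add_neg_cancel]
  have hS := prod_eq (xvY (F := F) (n := n)) s (X (Sum.inr m))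
  rw [hprod] at hS
  rcases mul_eq_zero.1 hS.symm with h3 | h3
  · exact absurd h3 (pow_ne_zero _ (by norm_num))
  · exact h3

end Rk

/-- Relation `R̃_k^+`. -/
theorem relation_Rk_tilde_plus (k : ℕ) (hk1 : 1 ≤ k) (hk2 : k ≤ n) :
    ∑ i ∈ Finset.range k, ∑ j ∈ Finset.range (n - k + 1),
      (-1 : MvPolynomial (Fin n ⊕ Fin n) F) ^ (i + j) *
        (cX F n (k - 1) i ^ (Fintype.card F) * cY F n (n - k) j *
            uInv F n ((i : ℤ) - (j : ℤ) + 1) ^ (Fintype.card F ^ min (i + 1) j)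
          - fX F n k ^ (Fintype.card F - 1) * cX F n (k - 1) i * cY F n (n - k) j *
            uInv F n ((i : ℤ) - (j : ℤ)) ^ (Fintype.card F ^ min i j))
    = 0 := by
  classical
  have hU1 : ∀ (i j : ℕ), uInv F n ((i : ℤ) - (j : ℤ) + 1) ^ (Fintype.card F ^ min (i + 1) j)
      = ∑ m : Fin n,
          X (Sum.inl m) ^ (Fintype.card F) ^ (i + 1) * X (Sum.inr m) ^ (Fintype.card F) ^ j := by
    intro i j
    have harg : (i : ℤ) - (j : ℤ) + 1 = ((i + 1 : ℕ) : ℤ) - (j : ℤ) := by push_cast; ring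
    rw [harg, Rk.uInv_pow]
  have hU0 : ∀ (i j : ℕ), uInv F n ((i : ℤ) - (j : ℤ)) ^ (Fintype.card F ^ min i j)
      = ∑ m : Fin n,
          X (Sum.inl m) ^ (Fintype.card F) ^ i * X (Sum.inr m) ^ (Fintype.card F) ^ j :=
    fun i j => Rk.uInv_pow i j
  simp only [hU1, hU0]
  have hcx : ∀ i, cX F n (k - 1) i = Rk.cG (Rk.xvX (F := F) (n := n)) (k - 1) i :=
    fun i => Rk.cX_eq (k - 1) i (by omega)
  have hcy : ∀ j, cY F n (n - k) j = Rk.cG (Rk.xvY (F := F) (n := n)) (n - k) j :=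
    fun j => Rk.cY_eq (n - k) j (by omega)
  have hfx : fX F n k = Rk.fG (Rk.xvX (F := F) (n := n)) k := Rk.fX_eq k hk1 hk2
  simp only [hcx, hcy, hfx]
  obtain ⟨K, rfl⟩ : ∃ K, k = K + 1 := ⟨k - 1, by omega⟩
  simp only [Nat.add_sub_cancel]
  have step1 : ∀ (i j : ℕ),
      (-1 : MvPolynomial (Fin n ⊕ Fin n) F) ^ (i + j) *
        (Rk.cG (Rk.xvX (F := F) (n := n)) K i ^ (Fintype.card F) *
            Rk.cG (Rk.xvY (F := F) (n := n)) (n - (K + 1)) j *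
            (∑ m : Fin n,
              X (Sum.inl m) ^ (Fintype.card F) ^ (i + 1) * X (Sum.inr m) ^ (Fintype.card F) ^ j)
          - Rk.fG (Rk.xvX (F := F) (n := n)) (K + 1) ^ (Fintype.card F - 1) *
              Rk.cG (Rk.xvX (F := F) (n := n)) K i *
              Rk.cG (Rk.xvY (F := F) (n := n)) (n - (K + 1)) j *
            (∑ m : Fin n,
              X (Sum.inl m) ^ (Fintype.card F) ^ i * X (Sum.inr m) ^ (Fintype.card F) ^ j))
      = ∑ m : Fin n,
          ((-1 : MvPolynomial (Fin n ⊕ Fin n) F) ^ i *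
            (Rk.cG (Rk.xvX (F := F) (n := n)) K i ^ (Fintype.card F) *
                X (Sum.inl m) ^ (Fintype.card F) ^ (i + 1)
              - Rk.fG (Rk.xvX (F := F) (n := n)) (K + 1) ^ (Fintype.card F - 1) *
                  Rk.cG (Rk.xvX (F := F) (n := n)) K i *
                  X (Sum.inl m) ^ (Fintype.card F) ^ i)) *
          ((-1 : MvPolynomial (Fin n ⊕ Fin n) F) ^ j *
            Rk.cG (Rk.xvY (F := F) (n := n)) (n - (K + 1)) j *
            X (Sum.inr m) ^ (Fintype.card F) ^ j) := by
    intro i j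
    rw [Finset.mul_sum, Finset.mul_sum, ← Finset.sum_sub_distrib, Finset.mul_sum]
    exact Finset.sum_congr rfl fun m _ => by ring
  calc
    _ = ∑ i ∈ Finset.range (K + 1), ∑ j ∈ Finset.range (n - (K + 1) + 1), ∑ m : Fin n,
          ((-1 : MvPolynomial (Fin n ⊕ Fin n) F) ^ i *
            (Rk.cG (Rk.xvX (F := F) (n := n)) K i ^ (Fintype.card F) *
                X (Sum.inl m) ^ (Fintype.card F) ^ (i + 1)
              - Rk.fG (Rk.xvX (F := F) (n := n)) (K + 1) ^ (Fintype.card F - 1) *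
                  Rk.cG (Rk.xvX (F := F) (n := n)) K i *
                  X (Sum.inl m) ^ (Fintype.card F) ^ i)) *
          ((-1 : MvPolynomial (Fin n ⊕ Fin n) F) ^ j *
            Rk.cG (Rk.xvY (F := F) (n := n)) (n - (K + 1)) j *
            X (Sum.inr m) ^ (Fintype.card F) ^ j) :=
      Finset.sum_congr rfl fun i _ => Finset.sum_congr rfl fun j _ => step1 i j
    _ = ∑ i ∈ Finset.range (K + 1), ∑ m : Fin n, ∑ j ∈ Finset.range (n - (K + 1) + 1),
          ((-1 : MvPolynomial (Fin n ⊕ Fin n) F) ^ i *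
            (Rk.cG (Rk.xvX (F := F) (n := n)) K i ^ (Fintype.card F) *
                X (Sum.inl m) ^ (Fintype.card F) ^ (i + 1)
              - Rk.fG (Rk.xvX (F := F) (n := n)) (K + 1) ^ (Fintype.card F - 1) *
                  Rk.cG (Rk.xvX (F := F) (n := n)) K i *
                  X (Sum.inl m) ^ (Fintype.card F) ^ i)) *
          ((-1 : MvPolynomial (Fin n ⊕ Fin n) F) ^ j *
            Rk.cG (Rk.xvY (F := F) (n := n)) (n - (K + 1)) j *
            X (Sum.inr m) ^ (Fintype.card F) ^ j) :=
      Finset.sum_congr rfl fun i _ => Finset.sum_comm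
    _ = ∑ m : Fin n, ∑ i ∈ Finset.range (K + 1), ∑ j ∈ Finset.range (n - (K + 1) + 1),
          ((-1 : MvPolynomial (Fin n ⊕ Fin n) F) ^ i *
            (Rk.cG (Rk.xvX (F := F) (n := n)) K i ^ (Fintype.card F) *
                X (Sum.inl m) ^ (Fintype.card F) ^ (i + 1)
              - Rk.fG (Rk.xvX (F := F) (n := n)) (K + 1) ^ (Fintype.card F - 1) *
                  Rk.cG (Rk.xvX (F := F) (n := n)) K i *
                  X (Sum.inl m) ^ (Fintype.card F) ^ i)) *
          ((-1 : MvPolynomial (Fin n ⊕ Fin n) F) ^ j *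
            Rk.cG (Rk.xvY (F := F) (n := n)) (n - (K + 1)) j *
            X (Sum.inr m) ^ (Fintype.card F) ^ j) :=
      Finset.sum_comm
    _ = ∑ m : Fin n,
          (∑ i ∈ Finset.range (K + 1),
            (-1 : MvPolynomial (Fin n ⊕ Fin n) F) ^ i *
              (Rk.cG (Rk.xvX (F := F) (n := n)) K i ^ (Fintype.card F) *
                  X (Sum.inl m) ^ (Fintype.card F) ^ (i + 1)
                - Rk.fG (Rk.xvX (F := F) (n := n)) (K + 1) ^ (Fintype.card F - 1) *
                    Rk.cG (Rk.xvX (F := F) (n := n)) K i *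
                    X (Sum.inl m) ^ (Fintype.card F) ^ i)) *
          (∑ j ∈ Finset.range (n - (K + 1) + 1),
            (-1 : MvPolynomial (Fin n ⊕ Fin n) F) ^ j *
              Rk.cG (Rk.xvY (F := F) (n := n)) (n - (K + 1)) j *
              X (Sum.inr m) ^ (Fintype.card F) ^ j) :=
      Finset.sum_congr rfl fun m _ => (Finset.sum_mul_sum _ _ _ _).symm
    _ = 0 := by
      refine Finset.sum_eq_zero fun m _ => ?_
      rcases lt_or_ge (m : ℕ) (K + 1) with hm | hm
      · rw [Rk.P_vanish m K hk2 hm, zero_mul]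
      · rw [Rk.Q_vanish m (n - (K + 1)) (by omega) (by have := m.isLt; omega), mul_zero]
end

section
/- (Minimality of the generating sets.) (a) For n ≥ 2, none of the 4n−3 elements f_1,…,f_n, f_1*,…,f_n*, u_{2−n},…,u_{n−2} of F_q[x_1,…,x_n,y_1,…,y_n] lies in the F_q-subalgebra generated by the remaining 4n−4 of these elements. (b) If q > 2, then for n ≥ 1 none of the 4n−1 elements f̃_1,…,f̃_n, f̃_1*,…,f̃_n*, u_{1−n},…,u_{n−1} lies in the F_q-subalgebra generated by the remaining 4n−2 of these elements. -/
open MvPolynomial Matrix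

variable (F : Type) [Field F] [Fintype F] (n : ℕ)

section Helpers

variable {F n}
variable {B : Type} [CommRing B] [Algebra F B]

lemma aeval_fX_eq_zero (g : Fin n ⊕ Fin n → B) (i : ℕ) (h1 : 1 ≤ i) (h2 : i ≤ n)
    (hg : ∀ a : Fin n, (a : ℕ) = i - 1 → g (Sum.inl a) = 0) :
    aeval g (fX F n i) = 0 := by
  rw [fX, dif_pos ⟨h1, h2⟩, map_prod]
  apply Finset.prod_eq_zero (Finset.mem_univ (0 : Fin (i - 1) → F))
  simp [hg ⟨i - 1, by omega⟩ rfl]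

lemma aeval_fX_center (g : Fin n ⊕ Fin n → B) (i : ℕ) (h1 : 1 ≤ i) (h2 : i ≤ n)
    (hg : ∀ a : Fin n, (a : ℕ) < i - 1 → g (Sum.inl a) = 0) :
    aeval g (fX F n i) = g (Sum.inl ⟨i - 1, by omega⟩) ^ (Fintype.card F) ^ (i - 1) := by
  rw [fX, dif_pos ⟨h1, h2⟩, map_prod]
  have : ∀ α : Fin (i - 1) → F,
      aeval g (X (Sum.inl (⟨i - 1, by omega⟩ : Fin n)) +
        ∑ j : Fin (i - 1), C (α j) * X (Sum.inl ⟨j.val, by omega⟩)) =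
      g (Sum.inl ⟨i - 1, by omega⟩) := by
    intro α
    have hz : ∀ j : Fin (i - 1), g (Sum.inl (⟨j.val, by omega⟩ : Fin n)) = 0 := fun j =>
      hg _ (by simpa using j.isLt)
    simp [hz]
  rw [Finset.prod_congr rfl fun α _ => this α, Finset.prod_const, Finset.card_univ,
    Fintype.card_fun, Fintype.card_fin]

lemma aeval_fY_eq_zero (g : Fin n ⊕ Fin n → B) (i : ℕ) (h1 : 1 ≤ i) (h2 : i ≤ n)
    (hg : ∀ a : Fin n, (a : ℕ) = n - i → g (Sum.inr a) = 0) :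
    aeval g (fY F n i) = 0 := by
  rw [fY, dif_pos ⟨h1, h2⟩, map_prod]
  apply Finset.prod_eq_zero (Finset.mem_univ (0 : Fin (i - 1) → F))
  simp [hg ⟨n - i, by omega⟩ rfl]

lemma aeval_fY_center (g : Fin n ⊕ Fin n → B) (i : ℕ) (h1 : 1 ≤ i) (h2 : i ≤ n)
    (hg : ∀ a : Fin n, n - i < (a : ℕ) → g (Sum.inr a) = 0) :
    aeval g (fY F n i) = g (Sum.inr ⟨n - i, by omega⟩) ^ (Fintype.card F) ^ (i - 1) := by
  rw [fY, dif_pos ⟨h1, h2⟩, map_prod]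
  have : ∀ α : Fin (i - 1) → F,
      aeval g (X (Sum.inr (⟨n - i, by omega⟩ : Fin n)) +
        ∑ j : Fin (i - 1), C (α j) * X (Sum.inr ⟨n - 1 - j.val, by omega⟩)) =
      g (Sum.inr ⟨n - i, by omega⟩) := by
    intro α
    have hz : ∀ j : Fin (i - 1), g (Sum.inr (⟨n - 1 - j.val, by omega⟩ : Fin n)) = 0 := fun j =>
      hg _ (by have := j.isLt; simp only []; omega)
    simp [hz]
  rw [Finset.prod_congr rfl fun α _ => this α, Finset.prod_const, Finset.card_univ,
    Fintype.card_fun, Fintype.card_fin]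

lemma aeval_uInv (g : Fin n ⊕ Fin n → B) (m : ℤ) :
    aeval g (uInv F n m) =
      if 0 ≤ m then ∑ a : Fin n, g (Sum.inl a) ^ (Fintype.card F) ^ m.toNat * g (Sum.inr a)
      else ∑ a : Fin n, g (Sum.inl a) * g (Sum.inr a) ^ (Fintype.card F) ^ (-m).toNat := by
  rw [uInv]
  split <;> simp

end Helpers

section Trunc

open Polynomial

variable (N c : ℕ)

noncomputable def lamb (hc : c < N) : AdjoinRoot ((X : Polynomial F) ^ N) →ₗ[F] F :=
  (AdjoinRoot.powerBasis' (monic_X_pow N)).basis.coord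
    ⟨c, by simpa [AdjoinRoot.powerBasis'] using hc⟩

variable {F N c}

lemma root_pow_eq_zero {e : ℕ} (h : N ≤ e) :
    (AdjoinRoot.root ((X : Polynomial F) ^ N)) ^ e = 0 := by
  rw [← AdjoinRoot.mk_X, ← map_pow, AdjoinRoot.mk_eq_zero]
  exact pow_dvd_pow Polynomial.X h

lemma lamb_root_pow (hc : c < N) {e : ℕ} (he : e < N) :
    lamb F N c hc ((AdjoinRoot.root ((X : Polynomial F) ^ N)) ^ e) =
      if e = c then 1 else 0 := by
  have hb : (AdjoinRoot.root ((X : Polynomial F) ^ N)) ^ e =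
      (AdjoinRoot.powerBasis' (monic_X_pow (R := F) N)).basis
        ⟨e, by simpa [AdjoinRoot.powerBasis'] using he⟩ := by
    rw [PowerBasis.basis_eq_pow]
    simp [AdjoinRoot.powerBasis']
  rw [lamb, hb, Module.Basis.coord_apply, Module.Basis.repr_self, Finsupp.single_apply]
  simp [Fin.ext_iff]

lemma lamb_root_pow_ne (hc : c < N) {e : ℕ} (he : e ≠ c) :
    lamb F N c hc ((AdjoinRoot.root ((X : Polynomial F) ^ N)) ^ e) = 0 := by
  rcases lt_or_ge e N with h | h
  · rw [lamb_root_pow hc h, if_neg he]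
  · rw [root_pow_eq_zero h, map_zero]

lemma lamb_root_pow_self (hc : c < N) :
    lamb F N c hc ((AdjoinRoot.root ((X : Polynomial F) ^ N)) ^ c) = 1 := by
  rw [lamb_root_pow hc hc, if_pos rfl]

lemma lamb_one (hc : c < N) (hc0 : c ≠ 0) : lamb F N c hc 1 = 0 := by
  have h := lamb_root_pow_ne (F := F) (N := N) hc (e := 0) (Ne.symm hc0)
  simpa using h

end Trunc

section Dsub

open TrivSqZeroExt Polynomial

variable (N c : ℕ)

local notation "A" => AdjoinRoot ((X : Polynomial F) ^ N)

noncomputable def Dsub (hc : c < N) : Subalgebra F (TrivSqZeroExt A A) where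
  carrier := {b | (∃ r : F, b.fst = algebraMap F A r) ∧ lamb F N c hc b.snd = 0}
  add_mem' := by
    rintro x y ⟨⟨r, hr⟩, hx⟩ ⟨⟨r', hr'⟩, hy⟩
    refine ⟨⟨r + r', ?_⟩, ?_⟩
    · rw [fst_add, hr, hr', map_add]
    · rw [snd_add, map_add, hx, hy, add_zero]
  mul_mem' := by
    rintro x y ⟨⟨r, hr⟩, hx⟩ ⟨⟨r', hr'⟩, hy⟩
    refine ⟨⟨r * r', ?_⟩, ?_⟩
    · rw [fst_mul, hr, hr', _root_.map_mul]
    · rw [snd_mul, map_add, hr, hr', algebraMap_smul, op_smul_eq_mul,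
        mul_comm, ← Algebra.smul_def, _root_.map_smul, _root_.map_smul, hx, hy, smul_zero, smul_zero,
        add_zero]
  algebraMap_mem' := by
    intro r
    refine ⟨⟨r, ?_⟩, ?_⟩
    · rw [algebraMap_eq_inl', fst_inl]
    · rw [algebraMap_eq_inl', snd_inl, map_zero]

variable {F N c}

lemma mem_Dsub_iff (hc : c < N) (b : TrivSqZeroExt A A) :
    b ∈ Dsub F N c hc ↔ (∃ r : F, b.fst = algebraMap F A r) ∧ lamb F N c hc b.snd = 0 :=
  Iff.rfl

lemma inr_mem_Dsub (hc : c < N) {m : A} (hm : lamb F N c hc m = 0) :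
    (TrivSqZeroExt.inr m : TrivSqZeroExt A A) ∈ Dsub F N c hc := by
  rw [mem_Dsub_iff]
  exact ⟨⟨0, by simp⟩, by simpa using hm⟩

lemma inr_one_pow_mem_Dsub (hc : c < N) (hc0 : c ≠ 0) (e : ℕ) :
    (TrivSqZeroExt.inr (1 : A) : TrivSqZeroExt A A) ^ e ∈ Dsub F N c hc := by
  match e with
  | 0 => simpa using (Dsub F N c hc).one_mem
  | 1 => simpa using inr_mem_Dsub hc (lamb_one hc hc0)
  | (k+2) =>
    have h : (TrivSqZeroExt.inr (1 : A) : TrivSqZeroExt A A) ^ (k + 2) =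
        ((TrivSqZeroExt.inr 1 * TrivSqZeroExt.inr 1) : TrivSqZeroExt A A) *
          TrivSqZeroExt.inr 1 ^ k := by ring
    rw [h, inr_mul_inr, zero_mul]
    exact (Dsub F N c hc).zero_mem

lemma inr_pow_eq_zero {R M : Type} [CommRing R] [AddCommGroup M] [Module R M] [Module Rᵐᵒᵖ M]
    [IsCentralScalar R M] (m : M) {e : ℕ} (he : 2 ≤ e) :
    (TrivSqZeroExt.inr m : TrivSqZeroExt R M) ^ e = 0 := by
  obtain ⟨k, rfl⟩ : ∃ k, e = 2 + k := ⟨e - 2, by omega⟩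
  rw [pow_add, sq, TrivSqZeroExt.inr_mul_inr, zero_mul]

end Dsub
section UCase

open TrivSqZeroExt Polynomial

variable {F n}

set_option maxHeartbeats 2000000 in
lemma u_pos_notmem (hn : 1 ≤ n) (d : ℕ) (hd : 1 ≤ d) (lo hi : ℤ) (j : ℤ) (hj0 : 0 ≤ j)
    (K : ℕ) (hK : K < n)
    (hX : Fintype.card F ^ j.toNat + 1 ≤ Fintype.card F ^ K * d) :
    uInv F n j ∉ Algebra.adjoin F
      (((Set.range fun i : Fin n => fX F n (i.val + 1) ^ d) ∪
        (Set.range fun i : Fin n => fY F n (i.val + 1) ^ d) ∪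
        (uInv F n '' Set.Icc lo hi)) \ {uInv F n j}) := by
  intro hmem
  set q := Fintype.card F with hq
  have hq2 : 2 ≤ q := Fintype.one_lt_card
  set jn := j.toNat with hjn
  set N := q ^ jn + 1 with hN
  set c := q ^ jn with hc'
  have hc : c < N := Nat.lt_succ_self _
  have hc0 : c ≠ 0 := by positivity
  set ε := AdjoinRoot.root ((Polynomial.X : Polynomial F) ^ N) with hε
  set g : Fin n ⊕ Fin n → TrivSqZeroExt (AdjoinRoot ((Polynomial.X : Polynomial F) ^ N))
      (AdjoinRoot ((Polynomial.X : Polynomial F) ^ N)) :=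
    Sum.elim (fun a => if (a : ℕ) = K then TrivSqZeroExt.inl ε else 0)
      (fun a => if (a : ℕ) = K then TrivSqZeroExt.inr 1 else 0) with hg
  have hgl : ∀ a : Fin n, g (Sum.inl a) = if (a : ℕ) = K then TrivSqZeroExt.inl ε else 0 :=
    fun a => rfl
  have hgr : ∀ a : Fin n, g (Sum.inr a) = if (a : ℕ) = K then TrivSqZeroExt.inr 1 else 0 :=
    fun a => rfl
  -- value of u_m under aeval g, for 0 ≤ m
  have huval : ∀ m : ℤ, 0 ≤ m → aeval g (uInv F n m) = TrivSqZeroExt.inr (ε ^ q ^ m.toNat) := by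
    intro m hm
    rw [aeval_uInv, if_pos hm]
    rw [Finset.sum_eq_single (⟨K, hK⟩ : Fin n)]
    · rw [hgl, hgr, if_pos rfl, if_pos rfl, inl_pow, inl_mul_inr, smul_eq_mul, mul_one]
    · intro b _ hb
      have hbK : (b : ℕ) ≠ K := fun h => hb (Fin.ext h)
      rw [hgl, if_neg hbK, zero_pow (by positivity), zero_mul]
    · intro h
      exact absurd (Finset.mem_univ _) h
  -- all the remaining generators evaluate into Dsub
  have hsub : (((Set.range fun i : Fin n => fX F n (i.val + 1) ^ d) ∪
        (Set.range fun i : Fin n => fY F n (i.val + 1) ^ d) ∪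
        (uInv F n '' Set.Icc lo hi)) \ {uInv F n j}) ⊆
      ((Dsub F N c hc).comap (MvPolynomial.aeval g) : Set (MvPolynomial (Fin n ⊕ Fin n) F)) := by
    rintro t ⟨ht, hts⟩
    simp only [SetLike.mem_coe, Subalgebra.mem_comap]
    rcases ht with (⟨i, rfl⟩ | ⟨i, rfl⟩) | ⟨m, hm, rfl⟩
    · -- fX case
      rw [map_pow]
      by_cases hiK : (i : ℕ) = K
      · rw [aeval_fX_center g (i.val + 1) (by omega) (by omega)
          (fun a ha => by rw [hgl, if_neg (by omega)])]
        have hcen : g (Sum.inl ⟨i.val + 1 - 1, by omega⟩) = TrivSqZeroExt.inl ε := by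
          rw [hgl]; simp [hiK]
        rw [hcen, inl_pow, inl_pow, ← pow_mul]
        have hz : ε ^ (q ^ (i.val + 1 - 1) * d) = 0 := by
          apply root_pow_eq_zero
          calc N ≤ q ^ K * d := hX
          _ = q ^ (i.val + 1 - 1) * d := by rw [Nat.add_sub_cancel, hiK]
        rw [hz, inl_zero]
        exact (Dsub F N c hc).zero_mem
      · rw [aeval_fX_eq_zero g (i.val + 1) (by omega) (by omega)
          (fun a ha => by rw [hgl, if_neg (by omega)]), zero_pow (by omega)]
        exact (Dsub F N c hc).zero_mem
    · -- fY case
      rw [map_pow]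
      by_cases hiK : n - (i.val + 1) = K
      · rw [aeval_fY_center g (i.val + 1) (by omega) (by omega)
          (fun a ha => by rw [hgr, if_neg (by omega)])]
        have hcen : g (Sum.inr ⟨n - (i.val + 1), by omega⟩) = TrivSqZeroExt.inr 1 := by
          rw [hgr]; simp [hiK]
        rw [hcen, ← pow_mul]
        exact inr_one_pow_mem_Dsub hc hc0 _
      · rw [aeval_fY_eq_zero g (i.val + 1) (by omega) (by omega)
          (fun a ha => by rw [hgr, if_neg (by omega)]), zero_pow (by omega)]
        exact (Dsub F N c hc).zero_mem
    · -- uInv case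
      have hmj : m ≠ j := fun h => hts (by rw [h]; rfl)
      rcases le_or_gt 0 m with hm0 | hm0
      · rw [huval m hm0]
        apply inr_mem_Dsub
        apply lamb_root_pow_ne
        intro hpow
        have : m.toNat = jn := Nat.pow_right_injective hq2 hpow
        omega
      · rw [aeval_uInv, if_neg (by omega)]
        have hzero : ∀ a : Fin n, a ∈ Finset.univ →
            g (Sum.inl a) * g (Sum.inr a) ^ q ^ (-m).toNat = 0 := by
          intro a _
          by_cases haK : (a : ℕ) = K
          · rw [hgr, if_pos haK, inr_pow_eq_zero _ (by
              have h1 : q ≤ q ^ (-m).toNat := Nat.le_self_pow (by omega) q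
              omega), mul_zero]
          · rw [hgl, if_neg haK, zero_mul]
        rw [Finset.sum_eq_zero hzero]
        exact (Dsub F N c hc).zero_mem
  have hDj := Algebra.adjoin_le hsub hmem
  rw [Subalgebra.mem_comap, huval j hj0, mem_Dsub_iff] at hDj
  have := hDj.2
  rw [snd_inr, ← hjn, lamb_root_pow_self] at this
  exact one_ne_zero this
end UCase
section UCaseNeg

open TrivSqZeroExt Polynomial

variable {F n}

set_option maxHeartbeats 2000000 in
lemma u_neg_notmem (d : ℕ) (hd : 1 ≤ d) (lo hi : ℤ) (j : ℤ) (hj0 : j < 0)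
    (K : ℕ) (hK : K < n)
    (hY : Fintype.card F ^ (-j).toNat + 1 ≤ Fintype.card F ^ (n - 1 - K) * d) :
    uInv F n j ∉ Algebra.adjoin F
      (((Set.range fun i : Fin n => fX F n (i.val + 1) ^ d) ∪
        (Set.range fun i : Fin n => fY F n (i.val + 1) ^ d) ∪
        (uInv F n '' Set.Icc lo hi)) \ {uInv F n j}) := by
  intro hmem
  set q := Fintype.card F with hq
  have hq2 : 2 ≤ q := Fintype.one_lt_card
  set jn := (-j).toNat with hjn
  have hjn1 : 1 ≤ jn := by omega
  set N := q ^ jn + 1 with hN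
  set c := q ^ jn with hc'
  have hc : c < N := Nat.lt_succ_self _
  have hc0 : c ≠ 0 := by positivity
  set ε := AdjoinRoot.root ((Polynomial.X : Polynomial F) ^ N) with hε
  set g : Fin n ⊕ Fin n → TrivSqZeroExt (AdjoinRoot ((Polynomial.X : Polynomial F) ^ N))
      (AdjoinRoot ((Polynomial.X : Polynomial F) ^ N)) :=
    Sum.elim (fun a => if (a : ℕ) = K then TrivSqZeroExt.inr 1 else 0)
      (fun a => if (a : ℕ) = K then TrivSqZeroExt.inl ε else 0) with hg
  have hgl : ∀ a : Fin n, g (Sum.inl a) = if (a : ℕ) = K then TrivSqZeroExt.inr 1 else 0 :=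
    fun a => rfl
  have hgr : ∀ a : Fin n, g (Sum.inr a) = if (a : ℕ) = K then TrivSqZeroExt.inl ε else 0 :=
    fun a => rfl
  have huval : ∀ m : ℤ, m < 0 → aeval g (uInv F n m) = TrivSqZeroExt.inr (ε ^ q ^ (-m).toNat) := by
    intro m hm
    rw [aeval_uInv, if_neg (by omega)]
    rw [Finset.sum_eq_single (⟨K, hK⟩ : Fin n)]
    · rw [hgl, hgr, if_pos rfl, if_pos rfl, inl_pow, inr_mul_inl, op_smul_eq_mul, one_mul]
    · intro b _ hb
      have hbK : (b : ℕ) ≠ K := fun h => hb (Fin.ext h)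
      rw [hgl, if_neg hbK, zero_mul]
    · intro h
      exact absurd (Finset.mem_univ _) h
  have hsub : (((Set.range fun i : Fin n => fX F n (i.val + 1) ^ d) ∪
        (Set.range fun i : Fin n => fY F n (i.val + 1) ^ d) ∪
        (uInv F n '' Set.Icc lo hi)) \ {uInv F n j}) ⊆
      ((Dsub F N c hc).comap (MvPolynomial.aeval g) : Set (MvPolynomial (Fin n ⊕ Fin n) F)) := by
    rintro t ⟨ht, hts⟩
    simp only [SetLike.mem_coe, Subalgebra.mem_comap]
    rcases ht with (⟨i, rfl⟩ | ⟨i, rfl⟩) | ⟨m, hm, rfl⟩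
    · -- fX case
      rw [map_pow]
      by_cases hiK : (i : ℕ) = K
      · rw [aeval_fX_center g (i.val + 1) (by omega) (by omega)
          (fun a ha => by rw [hgl, if_neg (by omega)])]
        have hcen : g (Sum.inl ⟨i.val + 1 - 1, by omega⟩) = TrivSqZeroExt.inr 1 := by
          rw [hgl]; simp [hiK]
        rw [hcen, ← pow_mul]
        exact inr_one_pow_mem_Dsub hc hc0 _
      · rw [aeval_fX_eq_zero g (i.val + 1) (by omega) (by omega)
          (fun a ha => by rw [hgl, if_neg (by omega)]), zero_pow (by omega)]
        exact (Dsub F N c hc).zero_mem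
    · -- fY case
      rw [map_pow]
      by_cases hiK : n - (i.val + 1) = K
      · rw [aeval_fY_center g (i.val + 1) (by omega) (by omega)
          (fun a ha => by rw [hgr, if_neg (by omega)])]
        have hcen : g (Sum.inr ⟨n - (i.val + 1), by omega⟩) = TrivSqZeroExt.inl ε := by
          rw [hgr]; simp [hiK]
        rw [hcen, inl_pow, inl_pow, ← pow_mul]
        have hz : ε ^ (q ^ (i.val + 1 - 1) * d) = 0 := by
          apply root_pow_eq_zero
          calc N ≤ q ^ (n - 1 - K) * d := hY
          _ = q ^ (i.val + 1 - 1) * d := by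
              congr 2
              omega
        rw [hz, inl_zero]
        exact (Dsub F N c hc).zero_mem
      · rw [aeval_fY_eq_zero g (i.val + 1) (by omega) (by omega)
          (fun a ha => by rw [hgr, if_neg (by omega)]), zero_pow (by omega)]
        exact (Dsub F N c hc).zero_mem
    · -- uInv case
      have hmj : m ≠ j := fun h => hts (by rw [h]; rfl)
      rcases le_or_gt 0 m with hm0 | hm0
      · rw [aeval_uInv, if_pos hm0]
        by_cases hmt : m.toNat = 0
        · have hsum : ∑ a : Fin n, g (Sum.inl a) ^ q ^ m.toNat * g (Sum.inr a) =
              TrivSqZeroExt.inr ε := by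
            rw [Finset.sum_eq_single (⟨K, hK⟩ : Fin n)]
            · rw [hgl, hgr, if_pos rfl, if_pos rfl, hmt, pow_zero, pow_one, inr_mul_inl,
                op_smul_eq_mul, one_mul]
            · intro b _ hb
              have hbK : (b : ℕ) ≠ K := fun h => hb (Fin.ext h)
              rw [hgl, if_neg hbK, zero_pow (by positivity), zero_mul]
            · intro h
              exact absurd (Finset.mem_univ _) h
          rw [hsum]
          apply inr_mem_Dsub
          have h1 := lamb_root_pow_ne (F := F) (N := N) hc (e := 1)
            (by
              have : 1 < q ^ jn := Nat.one_lt_pow (by omega) (by omega)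
              omega)
          simpa using h1
        · have hsum : ∑ a : Fin n, g (Sum.inl a) ^ q ^ m.toNat * g (Sum.inr a) = 0 := by
            apply Finset.sum_eq_zero
            intro a _
            by_cases haK : (a : ℕ) = K
            · rw [hgl, if_pos haK, inr_pow_eq_zero _ (by
                have h1 : q ≤ q ^ m.toNat := Nat.le_self_pow (by omega) q
                omega), zero_mul]
            · rw [hgl, if_neg haK, zero_pow (by positivity), zero_mul]
          rw [hsum]
          exact (Dsub F N c hc).zero_mem
      · rw [huval m hm0]
        apply inr_mem_Dsub
        apply lamb_root_pow_ne
        intro hpow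
        have : (-m).toNat = jn := Nat.pow_right_injective hq2 hpow
        omega
  have hDj := Algebra.adjoin_le hsub hmem
  rw [Subalgebra.mem_comap, huval j hj0, mem_Dsub_iff] at hDj
  have h2 := hDj.2
  rw [snd_inr, ← hjn, lamb_root_pow_self] at h2
  exact one_ne_zero h2

end UCaseNeg
section FCase

variable {F n}

lemma fX_notmem (d : ℕ) (hd : 1 ≤ d) (lo hi : ℤ) (i : Fin n) :
    fX F n (i.val + 1) ^ d ∉ Algebra.adjoin F
      (((Set.range fun i : Fin n => fX F n (i.val + 1) ^ d) ∪
        (Set.range fun i : Fin n => fY F n (i.val + 1) ^ d) ∪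
        (uInv F n '' Set.Icc lo hi)) \ {fX F n (i.val + 1) ^ d}) := by
  intro hmem
  set g1 : Fin n ⊕ Fin n → F :=
    Sum.elim (fun a => if a = i then (1 : F) else 0) (fun _ => 0) with hg1
  set g0 : Fin n ⊕ Fin n → F := fun _ => 0 with hg0
  set φ1 := MvPolynomial.aeval (R := F) g1 with hφ1
  set φ0 := MvPolynomial.aeval (R := F) g0 with hφ0
  have hzero : ∀ t : MvPolynomial (Fin n ⊕ Fin n) F,
      (t ∈ ((Set.range fun i : Fin n => fX F n (i.val + 1) ^ d) ∪
        (Set.range fun i : Fin n => fY F n (i.val + 1) ^ d) ∪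
        (uInv F n '' Set.Icc lo hi))) → φ0 t = 0 := by
    rintro t ((⟨i', rfl⟩ | ⟨i', rfl⟩) | ⟨m, hm, rfl⟩)
    · rw [map_pow, aeval_fX_eq_zero g0 (i'.val + 1) (by omega) (by omega) (fun a _ => rfl),
        zero_pow (by omega)]
    · rw [map_pow, aeval_fY_eq_zero g0 (i'.val + 1) (by omega) (by omega) (fun a _ => rfl),
        zero_pow (by omega)]
    · rw [aeval_uInv]
      split
      · exact Finset.sum_eq_zero fun a _ => by rw [mul_zero (M₀ := F)]
      · exact Finset.sum_eq_zero fun a _ => by rw [zero_mul (M₀ := F)]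
  have hsub : (((Set.range fun i : Fin n => fX F n (i.val + 1) ^ d) ∪
        (Set.range fun i : Fin n => fY F n (i.val + 1) ^ d) ∪
        (uInv F n '' Set.Icc lo hi)) \ {fX F n (i.val + 1) ^ d}) ⊆
      (AlgHom.equalizer φ1 φ0 : Set (MvPolynomial (Fin n ⊕ Fin n) F)) := by
    rintro t ⟨ht, hts⟩
    have h0 := hzero t ht
    have h1 : φ1 t = 0 := by
      rcases ht with (⟨i', rfl⟩ | ⟨i', rfl⟩) | ⟨m, hm, rfl⟩
      · have hii : i' ≠ i := by
          intro h
          exact hts (by rw [h]; rfl)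
        rw [map_pow, aeval_fX_eq_zero g1 (i'.val + 1) (by omega) (by omega)
          (fun a ha => by
            have : a ≠ i := by
              intro h'
              apply hii
              apply Fin.ext
              omega
            simp [hg1, this]), zero_pow (by omega)]
      · rw [map_pow, aeval_fY_eq_zero g1 (i'.val + 1) (by omega) (by omega)
          (fun a _ => rfl), zero_pow (by omega)]
      · rw [aeval_uInv]
        split
        · exact Finset.sum_eq_zero fun a _ => by
            show _ * g1 (Sum.inr a) = 0
            rw [show g1 (Sum.inr a) = 0 from rfl, mul_zero]
        · exact Finset.sum_eq_zero fun a _ => by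
            show g1 (Sum.inl a) * g1 (Sum.inr a) ^ _ = 0
            rw [show g1 (Sum.inr a) = 0 from rfl, zero_pow (by positivity), mul_zero]
    show φ1 t = φ0 t
    rw [h0, h1]
  have heq := Algebra.adjoin_le hsub hmem
  have h1 : φ1 (fX F n (i.val + 1) ^ d) = 1 := by
    rw [map_pow, aeval_fX_center g1 (i.val + 1) (by omega) (by omega)
      (fun a ha => by
        have : a ≠ i := by
          intro h'
          rw [h'] at ha
          omega
        simp [hg1, this])]
    have hcen : g1 (Sum.inl ⟨i.val + 1 - 1, by omega⟩) = 1 := by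
      have : (⟨i.val + 1 - 1, by omega⟩ : Fin n) = i := by
        apply Fin.ext
        simp
      simp [hg1, this]
    rw [hcen, one_pow, one_pow]
  have h0 : φ0 (fX F n (i.val + 1) ^ d) = 0 := by
    rw [map_pow, aeval_fX_eq_zero g0 (i.val + 1) (by omega) (by omega) (fun a _ => rfl),
      zero_pow (by omega)]
  have : (1 : F) = 0 := by rw [← h1, ← h0]; exact heq
  exact one_ne_zero this

lemma fY_notmem (d : ℕ) (hd : 1 ≤ d) (lo hi : ℤ) (i : Fin n) :
    fY F n (i.val + 1) ^ d ∉ Algebra.adjoin F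
      (((Set.range fun i : Fin n => fX F n (i.val + 1) ^ d) ∪
        (Set.range fun i : Fin n => fY F n (i.val + 1) ^ d) ∪
        (uInv F n '' Set.Icc lo hi)) \ {fY F n (i.val + 1) ^ d}) := by
  intro hmem
  set g1 : Fin n ⊕ Fin n → F :=
    Sum.elim (fun _ => 0) (fun a => if (a : ℕ) = n - (i.val + 1) then (1 : F) else 0) with hg1
  set g0 : Fin n ⊕ Fin n → F := fun _ => 0 with hg0
  set φ1 := MvPolynomial.aeval (R := F) g1 with hφ1
  set φ0 := MvPolynomial.aeval (R := F) g0 with hφ0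
  have hzero : ∀ t : MvPolynomial (Fin n ⊕ Fin n) F,
      (t ∈ ((Set.range fun i : Fin n => fX F n (i.val + 1) ^ d) ∪
        (Set.range fun i : Fin n => fY F n (i.val + 1) ^ d) ∪
        (uInv F n '' Set.Icc lo hi))) → φ0 t = 0 := by
    rintro t ((⟨i', rfl⟩ | ⟨i', rfl⟩) | ⟨m, hm, rfl⟩)
    · rw [map_pow, aeval_fX_eq_zero g0 (i'.val + 1) (by omega) (by omega) (fun a _ => rfl),
        zero_pow (by omega)]
    · rw [map_pow, aeval_fY_eq_zero g0 (i'.val + 1) (by omega) (by omega) (fun a _ => rfl),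
        zero_pow (by omega)]
    · rw [aeval_uInv]
      split
      · exact Finset.sum_eq_zero fun a _ => by rw [mul_zero (M₀ := F)]
      · exact Finset.sum_eq_zero fun a _ => by rw [zero_mul (M₀ := F)]
  have hsub : (((Set.range fun i : Fin n => fX F n (i.val + 1) ^ d) ∪
        (Set.range fun i : Fin n => fY F n (i.val + 1) ^ d) ∪
        (uInv F n '' Set.Icc lo hi)) \ {fY F n (i.val + 1) ^ d}) ⊆
      (AlgHom.equalizer φ1 φ0 : Set (MvPolynomial (Fin n ⊕ Fin n) F)) := by
    rintro t ⟨ht, hts⟩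
    have h0 := hzero t ht
    have h1 : φ1 t = 0 := by
      rcases ht with (⟨i', rfl⟩ | ⟨i', rfl⟩) | ⟨m, hm, rfl⟩
      · rw [map_pow, aeval_fX_eq_zero g1 (i'.val + 1) (by omega) (by omega)
          (fun a _ => rfl), zero_pow (by omega)]
      · have hii : i' ≠ i := by
          intro h
          exact hts (by rw [h]; rfl)
        rw [map_pow, aeval_fY_eq_zero g1 (i'.val + 1) (by omega) (by omega)
          (fun a ha => by
            have hne : (a : ℕ) ≠ n - (i.val + 1) := by
              have : i'.val ≠ i.val := fun h' => hii (Fin.ext h')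
              omega
            simp [hg1, hne]), zero_pow (by omega)]
      · rw [aeval_uInv]
        split
        · exact Finset.sum_eq_zero fun a _ => by
            show g1 (Sum.inl a) ^ _ * _ = 0
            rw [show g1 (Sum.inl a) = 0 from rfl, zero_pow (by positivity), zero_mul]
        · exact Finset.sum_eq_zero fun a _ => by
            show g1 (Sum.inl a) * _ = 0
            rw [show g1 (Sum.inl a) = 0 from rfl, zero_mul]
    show φ1 t = φ0 t
    rw [h0, h1]
  have heq := Algebra.adjoin_le hsub hmem
  have h1 : φ1 (fY F n (i.val + 1) ^ d) = 1 := by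
    rw [map_pow, aeval_fY_center g1 (i.val + 1) (by omega) (by omega)
      (fun a ha => by
        have hne : (a : ℕ) ≠ n - (i.val + 1) := by omega
        simp [hg1, hne])]
    have hcen : g1 (Sum.inr ⟨n - (i.val + 1), by omega⟩) = 1 := by
      simp [hg1]
    rw [hcen, one_pow, one_pow]
  have h0 : φ0 (fY F n (i.val + 1) ^ d) = 0 := by
    rw [map_pow, aeval_fY_eq_zero g0 (i.val + 1) (by omega) (by omega) (fun a _ => rfl),
      zero_pow (by omega)]
  have : (1 : F) = 0 := by rw [← h1, ← h0]; exact heq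
  exact one_ne_zero this

end FCase

/-- Minimality of the generating sets: (a) for `n ≥ 2`, none of the generators
`f_1,…,f_n, f_1^*,…,f_n^*, u_{2-n},…,u_{n-2}` lies in the subalgebra generated by the
remaining ones; (b) if `q > 2`, for `n ≥ 1` the same holds for the generators
`f̃_1,…,f̃_n, f̃_1^*,…,f̃_n^*, u_{1-n},…,u_{n-1}`. -/
theorem generators_minimal :
    (2 ≤ n →
      ∀ s ∈ ((Set.range fun i : Fin n => fX F n (i.val + 1)) ∪
          (Set.range fun i : Fin n => fY F n (i.val + 1)) ∪
          (uInv F n '' Set.Icc (2 - (n : ℤ)) ((n : ℤ) - 2))),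
        s ∉ Algebra.adjoin F
          (((Set.range fun i : Fin n => fX F n (i.val + 1)) ∪
            (Set.range fun i : Fin n => fY F n (i.val + 1)) ∪
            (uInv F n '' Set.Icc (2 - (n : ℤ)) ((n : ℤ) - 2))) \ {s})) ∧
    (2 < Fintype.card F → 1 ≤ n →
      ∀ s ∈ ((Set.range fun i : Fin n => fX F n (i.val + 1) ^ (Fintype.card F - 1)) ∪
          (Set.range fun i : Fin n => fY F n (i.val + 1) ^ (Fintype.card F - 1)) ∪
          (uInv F n '' Set.Icc (1 - (n : ℤ)) ((n : ℤ) - 1))),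
        s ∉ Algebra.adjoin F
          (((Set.range fun i : Fin n => fX F n (i.val + 1) ^ (Fintype.card F - 1)) ∪
            (Set.range fun i : Fin n => fY F n (i.val + 1) ^ (Fintype.card F - 1)) ∪
            (uInv F n '' Set.Icc (1 - (n : ℤ)) ((n : ℤ) - 1))) \ {s})) := by
  have hq2 : 2 ≤ Fintype.card F := Fintype.one_lt_card
  constructor
  · intro hn s hs
    rcases hs with (⟨i, rfl⟩ | ⟨i, rfl⟩) | ⟨j, hj, rfl⟩
    · simpa only [pow_one] using
        fX_notmem (F := F) (n := n) 1 le_rfl (2 - (n : ℤ)) ((n : ℤ) - 2) i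
    · simpa only [pow_one] using
        fY_notmem (F := F) (n := n) 1 le_rfl (2 - (n : ℤ)) ((n : ℤ) - 2) i
    · obtain ⟨hj1, hj2⟩ := hj
      rcases le_or_gt 0 j with hj0 | hj0
      · have harith : Fintype.card F ^ j.toNat + 1 ≤ Fintype.card F ^ (j.toNat + 1) * 1 := by
          have h1 : 1 ≤ Fintype.card F ^ j.toNat := Nat.one_le_pow _ _ (by omega)
          have h2 : Fintype.card F ^ j.toNat * 2 ≤ Fintype.card F ^ j.toNat * Fintype.card F :=
            Nat.mul_le_mul_left _ hq2
          rw [mul_one, pow_succ]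
          omega
        simpa only [pow_one] using
          u_pos_notmem (F := F) (n := n) (by omega) 1 le_rfl (2 - (n : ℤ)) ((n : ℤ) - 2) j hj0
            (j.toNat + 1) (by omega) harith
      · have hjn : (-j).toNat ≤ n - 2 := by omega
        have harith : Fintype.card F ^ (-j).toNat + 1 ≤
            Fintype.card F ^ (n - 1 - (n - 2 - (-j).toNat)) * 1 := by
          have heq : n - 1 - (n - 2 - (-j).toNat) = (-j).toNat + 1 := by omega
          have h1 : 1 ≤ Fintype.card F ^ (-j).toNat := Nat.one_le_pow _ _ (by omega)
          have h2 : Fintype.card F ^ (-j).toNat * 2 ≤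
              Fintype.card F ^ (-j).toNat * Fintype.card F := Nat.mul_le_mul_left _ hq2
          rw [heq, mul_one, pow_succ]
          omega
        simpa only [pow_one] using
          u_neg_notmem (F := F) (n := n) 1 le_rfl (2 - (n : ℤ)) ((n : ℤ) - 2) j hj0
            (n - 2 - (-j).toNat) (by omega) harith
  · intro hq3 hn s hs
    rcases hs with (⟨i, rfl⟩ | ⟨i, rfl⟩) | ⟨j, hj, rfl⟩
    · exact fX_notmem (F := F) (n := n) (Fintype.card F - 1) (by omega)
        (1 - (n : ℤ)) ((n : ℤ) - 1) i
    · exact fY_notmem (F := F) (n := n) (Fintype.card F - 1) (by omega)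
        (1 - (n : ℤ)) ((n : ℤ) - 1) i
    · obtain ⟨hj1, hj2⟩ := hj
      rcases le_or_gt 0 j with hj0 | hj0
      · have harith : Fintype.card F ^ j.toNat + 1 ≤
            Fintype.card F ^ j.toNat * (Fintype.card F - 1) := by
          have h1 : 1 ≤ Fintype.card F ^ j.toNat := Nat.one_le_pow _ _ (by omega)
          have h2 : Fintype.card F ^ j.toNat * 2 ≤
              Fintype.card F ^ j.toNat * (Fintype.card F - 1) :=
            Nat.mul_le_mul_left _ (by omega)
          omega
        exact u_pos_notmem (F := F) (n := n) hn (Fintype.card F - 1) (by omega)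
          (1 - (n : ℤ)) ((n : ℤ) - 1) j hj0 j.toNat (by omega) harith
      · have hjn : (-j).toNat ≤ n - 1 := by omega
        have harith : Fintype.card F ^ (-j).toNat + 1 ≤
            Fintype.card F ^ (n - 1 - (n - 1 - (-j).toNat)) * (Fintype.card F - 1) := by
          have heq : n - 1 - (n - 1 - (-j).toNat) = (-j).toNat := by omega
          have h1 : 1 ≤ Fintype.card F ^ (-j).toNat := Nat.one_le_pow _ _ (by omega)
          have h2 : Fintype.card F ^ (-j).toNat * 2 ≤
              Fintype.card F ^ (-j).toNat * (Fintype.card F - 1) :=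
            Nat.mul_le_mul_left _ (by omega)
          rw [heq]
          omega
        exact u_neg_notmem (F := F) (n := n) (Fintype.card F - 1) (by omega)
          (1 - (n : ℤ)) ((n : ℤ) - 1) j hj0 (n - 1 - (-j).toNat) (by omega) harith
end
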